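/- For every integer d ≥ 2, the polynomials C_d(m) = Σ_{k=0}^{d} C(2d, 2k)·C(m+d−k, d) satisfy the recurrence d·C_d(m) = 2(2m+1)·C_{d−1}(m) + (d−2)·C_{d−2}(m). -/

import Mathlib

open Finset

/-- coefficient of `binom(m,j)` in the Ehrhart polynomial `C_d(m)` -/
def typeC_Aa (d j : ℕ) : ℕ := ∑ k ∈ range (j+1), (2*d).choose (2*k) * (d-k).choose (j-k)

/-- odd companion -/
def typeC_Qa (d j : ℕ) : ℕ := ∑ k ∈ range (j+1), (2*d).choose (2*k+1) * (d-k).choose (j-k)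

namespace typeC

local notation "Aa" => typeC_Aa
local notation "Qa" => typeC_Qa

lemma Aa_zero (d : ℕ) : Aa d 0 = 1 := by simp [typeC_Aa]

lemma Qa_zero (d : ℕ) : Qa d 0 = 2*d := by simp [typeC_Qa]

lemma choose_two_step (n k : ℕ) :
    (n+2).choose (k+2) = n.choose k + 2*n.choose (k+1) + n.choose (k+2) := by
  rw [Nat.choose_succ_succ' (n+1) (k+1), Nat.choose_succ_succ' n k, Nat.choose_succ_succ' n (k+1)]
  ring

/-- key per-term Pascal split with the vanishing-factor guard -/
lemma per_term_even (d j k : ℕ) (hk : k ∈ range (j+2)) :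
    (2*d).choose (2*k) * (d+1-k).choose (j+1-k)
      = (2*d).choose (2*k) * (d-k).choose (j+1-k)
        + (if k < j+1 then (2*d).choose (2*k) * (d-k).choose (j-k) else 0) := by
  rcases lt_or_ge d k with h | h
  · -- k > d : the factor (2*d).choose (2*k) = 0
    have : (2*d).choose (2*k) = 0 := Nat.choose_eq_zero_of_lt (by omega)
    simp [this]
  · rcases Nat.lt_or_ge k (j+1) with hj | hj
    · -- k ≤ j and k ≤ d: Pascal
      have h1 : d+1-k = (d-k)+1 := by omega
      have h2 : j+1-k = (j-k)+1 := by omega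
      rw [h1, h2, Nat.choose_succ_succ' (d-k) (j-k), if_pos hj]
      ring
    · -- k = j+1
      have hk' : k = j+1 := by simp at hk; omega
      subst hk'
      have h2 : j+1-(j+1) = 0 := by omega
      rw [h2, if_neg (by omega), Nat.choose_zero_right, Nat.choose_zero_right, add_zero]

lemma per_term_odd (d j k : ℕ) (hk : k ∈ range (j+2)) :
    (2*d).choose (2*k+1) * (d+1-k).choose (j+1-k)
      = (2*d).choose (2*k+1) * (d-k).choose (j+1-k)
        + (if k < j+1 then (2*d).choose (2*k+1) * (d-k).choose (j-k) else 0) := by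
  rcases lt_or_ge d k with h | h
  · have : (2*d).choose (2*k+1) = 0 := Nat.choose_eq_zero_of_lt (by omega)
    simp [this]
  · rcases Nat.lt_or_ge k (j+1) with hj | hj
    · have h1 : d+1-k = (d-k)+1 := by omega
      have h2 : j+1-k = (j-k)+1 := by omega
      rw [h1, h2, Nat.choose_succ_succ' (d-k) (j-k), if_pos hj]
      ring
    · have hk' : k = j+1 := by simp at hk; omega
      subst hk'
      have h2 : j+1-(j+1) = 0 := by omega
      rw [h2, if_neg (by omega), Nat.choose_zero_right, Nat.choose_zero_right, add_zero]

lemma Mlem (d j : ℕ) :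
    ∑ k ∈ range (j+2), (2*d).choose (2*k) * (d+1-k).choose (j+1-k)
      = Aa d (j+1) + Aa d j := by
  rw [Finset.sum_congr rfl (per_term_even d j), Finset.sum_add_distrib]
  congr 1
  rw [Finset.sum_range_succ, if_neg (lt_irrefl _), add_zero]
  exact Finset.sum_congr rfl fun k hk => if_pos (mem_range.mp hk)

lemma Nlem (d j : ℕ) :
    ∑ k ∈ range (j+2), (2*d).choose (2*k+1) * (d+1-k).choose (j+1-k)
      = Qa d (j+1) + Qa d j := by
  rw [Finset.sum_congr rfl (per_term_odd d j), Finset.sum_add_distrib]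
  congr 1
  rw [Finset.sum_range_succ, if_neg (lt_irrefl _), add_zero]
  exact Finset.sum_congr rfl fun k hk => if_pos (mem_range.mp hk)


lemma shift_even (d j : ℕ) :
    ∑ k ∈ range (j+2), (2*d).choose (2*k) * (d+1-k).choose (j+1-k)
      = (∑ i ∈ range (j+1), (2*d).choose (2*i+2) * (d-i).choose (j-i)) + (d+1).choose (j+1) := by
  rw [Finset.sum_range_succ']
  congr 1
  · refine sum_congr rfl fun i hi => ?_
    rw [show 2*(i+1) = 2*i+2 from by ring, show d+1-(i+1) = d-i from by omega,
        show j+1-(i+1) = j-i from by omega]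
  · simp

lemma shift_odd (d j : ℕ) :
    ∑ k ∈ range (j+2), (2*d).choose (2*k+1) * (d+1-k).choose (j+1-k)
      = (∑ i ∈ range (j+1), (2*d).choose (2*i+3) * (d-i).choose (j-i)) + 2*d*(d+1).choose (j+1) := by
  rw [Finset.sum_range_succ']
  congr 1
  · refine sum_congr rfl fun i hi => ?_
    rw [show 2*(i+1)+1 = 2*i+3 from by ring, show d+1-(i+1) = d-i from by omega,
        show j+1-(i+1) = j-i from by omega]
  · simp [Nat.choose_one_right]

lemma prec (d j : ℕ) : Aa (d+1) (j+1) = Aa d (j+1) + 2*Aa d j + 2*Qa d j := by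
  have key : Aa (d+1) (j+1)
      = Aa d j + 2*Qa d j
        + ((∑ i ∈ range (j+1), (2*d).choose (2*i+2) * (d-i).choose (j-i)) + (d+1).choose (j+1)) := by
    show (∑ k ∈ range (j+2), (2*(d+1)).choose (2*k) * ((d+1)-k).choose ((j+1)-k)) = _
    rw [Finset.sum_range_succ']
    have hterm : ∀ i ∈ range (j+1),
        (2*(d+1)).choose (2*(i+1)) * ((d+1)-(i+1)).choose ((j+1)-(i+1))
          = (2*d).choose (2*i) * (d-i).choose (j-i)
            + 2*((2*d).choose (2*i+1) * (d-i).choose (j-i))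
            + (2*d).choose (2*i+2) * (d-i).choose (j-i) := by
      intro i hi
      rw [show 2*(d+1) = 2*d+2 from by ring, show 2*(i+1) = 2*i+2 from by ring,
          show (d+1)-(i+1) = d-i from by omega, show (j+1)-(i+1) = j-i from by omega,
          choose_two_step]
      ring
    rw [Finset.sum_congr rfl hterm, Finset.sum_add_distrib, Finset.sum_add_distrib,
        ← Finset.mul_sum]
    have hz : (2*(d+1)).choose (2*0) * ((d+1)-0).choose ((j+1)-0) = (d+1).choose (j+1) := by simp
    rw [hz]
    show (Aa d j + 2*Qa d j) + _ + _ = _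
    ring
  have h4 := (shift_even d j).symm.trans (Mlem d j)
  omega

lemma qrec (d j : ℕ) :
    Qa (d+1) (j+1) = Qa d (j+1) + 2*Qa d j + 2*Aa d (j+1) + 2*Aa d j := by
  have key : Qa (d+1) (j+1)
      = Qa d j
        + 2*((∑ i ∈ range (j+1), (2*d).choose (2*i+2) * (d-i).choose (j-i)))
        + ((∑ i ∈ range (j+1), (2*d).choose (2*i+3) * (d-i).choose (j-i)))
        + (2*d+2) * (d+1).choose (j+1) := by
    show (∑ k ∈ range (j+2), (2*(d+1)).choose (2*k+1) * ((d+1)-k).choose ((j+1)-k)) = _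
    rw [Finset.sum_range_succ']
    have hterm : ∀ i ∈ range (j+1),
        (2*(d+1)).choose (2*(i+1)+1) * ((d+1)-(i+1)).choose ((j+1)-(i+1))
          = (2*d).choose (2*i+1) * (d-i).choose (j-i)
            + 2*((2*d).choose (2*i+2) * (d-i).choose (j-i))
            + (2*d).choose (2*i+3) * (d-i).choose (j-i) := by
      intro i hi
      rw [show 2*(d+1) = 2*d+2 from by ring, show 2*(i+1)+1 = (2*i+1)+2 from by ring,
          show (d+1)-(i+1) = d-i from by omega, show (j+1)-(i+1) = j-i from by omega,
          choose_two_step, show 2*i+1+1 = 2*i+2 from by ring, show 2*i+1+2 = 2*i+3 from by ring]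
      ring
    rw [Finset.sum_congr rfl hterm, Finset.sum_add_distrib, Finset.sum_add_distrib,
        ← Finset.mul_sum]
    have hz : (2*(d+1)).choose (2*0+1) * ((d+1)-0).choose ((j+1)-0)
        = (2*d+2) * (d+1).choose (j+1) := by
      rw [Nat.sub_zero, Nat.sub_zero, show 2*0+1 = 1 from rfl, Nat.choose_one_right,
          show 2*(d+1) = 2*d+2 from by ring]
    rw [hz]
    show (Qa d j + _) + _ + _ = _
    ring
  have h4 := (shift_even d j).symm.trans (Mlem d j)
  have h5 := (shift_odd d j).symm.trans (Nlem d j)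
  -- key: Q' = Qdj + 2*S4 + S5 + (2d+2)X ; h4: S4 + X = A(j+1)+A(j) ; h5: S5 + 2d*X = Q(j+1)+Q(j)
  -- target: Q' = Q(j+1) + 2Qj + 2A(j+1) + 2Aj
  -- nonlinear in d*X: use linear_combination on ℕ? use omega after generalizing
  set S4 := ∑ i ∈ range (j+1), (2*d).choose (2*i+2) * (d-i).choose (j-i)
  set S5 := ∑ i ∈ range (j+1), (2*d).choose (2*i+3) * (d-i).choose (j-i)
  set X := (d+1).choose (j+1)
  have hdx : 2*d*X = 2*(d*X) := by ring
  have hdx2 : (2*d+2)*X = 2*(d*X) + 2*X := by ring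
  rw [hdx] at h5
  rw [hdx2] at key
  generalize d*X = y at h5 key
  omega

lemma pas1 (n t : ℕ) : 4*(n+3).choose (t+3) = 4*(n+1).choose (t+3) + 8*(n+1).choose (t+2)
    + 2*(n+1).choose (t+1) + 2*n.choose (t+1) + 2*n.choose t := by
  have h3 := Nat.choose_succ_succ' (n+2) (t+2)
  have h2a := Nat.choose_succ_succ' (n+1) (t+1)
  have h2b := Nat.choose_succ_succ' (n+1) (t+2)
  have h1a := Nat.choose_succ_succ' n t
  have h1b := Nat.choose_succ_succ' n (t+1)
  linarith

lemma pas2 (n t : ℕ) : 16*(n+3).choose (t+4) + 4*(n+2).choose (t+2)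
    = 16*(n+2).choose (t+4) + 12*(n+1).choose (t+2) + 2*n.choose t + 8*(n+2).choose (t+3)
      + 8*(n+1).choose (t+3) + 2*(n+1).choose (t+1) + 2*n.choose (t+1) := by
  have h3 := Nat.choose_succ_succ' (n+2) (t+3)
  have h2a := Nat.choose_succ_succ' (n+1) (t+2)
  have h2b := Nat.choose_succ_succ' (n+1) (t+1)
  have h1a := Nat.choose_succ_succ' n t
  linarith

lemma base_A (j : ℕ) : Aa 0 (j+1) = 0 := by
  refine Finset.sum_eq_zero fun k hk => ?_
  match k with
  | 0 => simp [Nat.choose_eq_zero_of_lt (Nat.succ_pos j)]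
  | (k+1) => simp [Nat.choose_eq_zero_of_lt (show 0 < 2*(k+1) by omega)]

lemma base_Q (j : ℕ) : Qa 0 j = 0 := by
  refine Finset.sum_eq_zero fun k hk => ?_
  simp [Nat.choose_eq_zero_of_lt (show (0:ℕ) < 2*k+1 by omega)]

/-- closed forms, proved by simultaneous induction on `d` -/
lemma closed (d : ℕ) : (∀ j : ℕ,
      2 * Aa d (j+1) = 4^(j+1) * ((d+j+1).choose (2*j+2) + (d+j).choose (2*j+2)))
    ∧ (∀ j : ℕ,
      2 * Qa d (j+1) = 4^(j+1) * (4 * (d+j+1).choose (2*j+3) + (d+j).choose (2*j+1))) := by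
  induction d with
  | zero =>
    constructor <;> intro j
    · rw [base_A]
      have h1 : (0+j+1).choose (2*j+2) = 0 := Nat.choose_eq_zero_of_lt (by omega)
      have h2 : (0+j).choose (2*j+2) = 0 := Nat.choose_eq_zero_of_lt (by omega)
      rw [h1, h2]
      simp
    · rw [base_Q]
      have h1 : (0+j+1).choose (2*j+3) = 0 := Nat.choose_eq_zero_of_lt (by omega)
      have h2 : (0+j).choose (2*j+1) = 0 := Nat.choose_eq_zero_of_lt (by omega)
      rw [h1, h2]
      simp
  | succ d ih =>
    obtain ⟨ihA, ihQ⟩ := ih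
    constructor <;> intro j
    · -- CAs (d+1) j
      match j with
      | 0 =>
        have hp := prec d 0
        have hA := ihA 0
        have hP1 := Nat.choose_succ_succ' (d+1) 1
        have hP2 := Nat.choose_succ_succ' d 0
        have hP3 := Nat.choose_succ_succ' d 1
        have hc1 : (d+1).choose 1 = d+1 := Nat.choose_one_right _
        have hc2 : d.choose 1 = d := Nat.choose_one_right _
        have hA0 := Aa_zero d
        have hQ0 := Qa_zero d
        norm_num at hp hA hP1 hP2 hP3 ⊢
        zify at hp hA hA0 hQ0 hP1 hP3 hc1 hc2 ⊢
        linear_combination 2*hp + hA + 4*hA0 + 4*hQ0 - 4*hP1 - 4*hP3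
      | (j+1) =>
        have hp := prec d (j+1)
        have hA1 := ihA (j+1)
        have hA0 := ihA j
        have hQ0 := ihQ j
        have hpas := pas1 (d+j) (2*j+1)
        simp only [show d+(j+1)+1 = d+j+2 from by ring, show d+(j+1) = d+j+1 from by ring,
          show 2*(j+1)+2 = 2*j+4 from by ring, show 2*(j+1)+3 = 2*j+5 from by ring,
          show 2*(j+1)+1 = 2*j+3 from by ring, show d+1+(j+1)+1 = d+j+3 from by ring,
          show d+1+(j+1) = d+j+2 from by ring, show 2*j+1+1 = 2*j+2 from by ring,
          show 2*j+1+2 = 2*j+3 from by ring, show 2*j+1+3 = 2*j+4 from by ring,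
          show 2*j+1+4 = 2*j+5 from by ring, show d+j+1+1 = d+j+2 from by ring,
          show d+j+2+1 = d+j+3 from by ring] at hp hA1 hA0 hQ0 hpas ⊢
        zify at hp hA1 hA0 hQ0 hpas ⊢
        linear_combination 2*hp + hA1 + 2*hA0 + 2*hQ0 - (4:ℤ)^(j+1)*hpas
    · -- CQs (d+1) j
      match j with
      | 0 =>
        have hq := qrec d 0
        have hQ := ihQ 0
        have hA := ihA 0
        have hP1 := Nat.choose_succ_succ' (d+1) 2
        have hP2 := Nat.choose_succ_succ' d 1
        have hP3 := Nat.choose_succ_succ' d 0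
        have hc1 : (d+1).choose 1 = d+1 := Nat.choose_one_right _
        have hc2 : d.choose 1 = d := Nat.choose_one_right _
        have hA0 := Aa_zero d
        have hQ0 := Qa_zero d
        norm_num at hq hQ hA hP1 hP2 hP3 ⊢
        zify at hq hQ hA hA0 hQ0 hP1 hP2 hc1 hc2 ⊢
        linear_combination 2*hq + hQ + 2*hA + 4*hQ0 + 4*hA0 - 16*hP1 - 8*hP2
      | (j+1) =>
        have hq := qrec d (j+1)
        have hQ1 := ihQ (j+1)
        have hQ0 := ihQ j
        have hA1 := ihA (j+1)
        have hA0 := ihA j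
        have hpas := pas2 (d+j) (2*j+1)
        simp only [show d+(j+1)+1 = d+j+2 from by ring, show d+(j+1) = d+j+1 from by ring,
          show 2*(j+1)+2 = 2*j+4 from by ring, show 2*(j+1)+3 = 2*j+5 from by ring,
          show 2*(j+1)+1 = 2*j+3 from by ring, show d+1+(j+1)+1 = d+j+3 from by ring,
          show d+1+(j+1) = d+j+2 from by ring, show 2*j+1+1 = 2*j+2 from by ring,
          show 2*j+1+2 = 2*j+3 from by ring, show 2*j+1+3 = 2*j+4 from by ring,
          show 2*j+1+4 = 2*j+5 from by ring, show d+j+1+1 = d+j+2 from by ring,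
          show d+j+2+1 = d+j+3 from by ring] at hq hQ1 hQ0 hA1 hA0 hpas ⊢
        zify at hq hQ1 hQ0 hA1 hA0 hpas ⊢
        linear_combination 2*hq + hQ1 + 2*hQ0 + 2*hA1 + 2*hA0 - (4:ℤ)^(j+1)*hpas


lemma closedA (d : ℕ) : ∀ j : ℕ,
      2 * Aa d (j+1) = 4^(j+1) * ((d+j+1).choose (2*j+2) + (d+j).choose (2*j+2)) :=
  (closed d).1

lemma azero (d j : ℕ) (h : d < j) : Aa d j = 0 := by
  refine Finset.sum_eq_zero fun k hk => ?_
  rcases le_or_gt k d with hkd | hkd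
  · have hz : (d-k).choose (j-k) = 0 := Nat.choose_eq_zero_of_lt (by omega)
    simp [hz]
  · have hz : (2*d).choose (2*k) = 0 := Nat.choose_eq_zero_of_lt (by omega)
    simp [hz]

lemma CAu (e j : ℕ) :
    2 * Aa (e+1) j = 4^j * ((e+j+1).choose (2*j) + (e+j).choose (2*j)) := by
  match j with
  | 0 => simp [Aa_zero]
  | (j+1) =>
    have h := closedA (e+1) j
    rw [show e+(j+1)+1 = e+1+j+1 from by ring, show e+(j+1) = e+1+j from by ring,
        show 2*(j+1) = 2*j+2 from by ring]
    exact h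

lemma keyA (e j : ℕ) : (e+2)*Aa (e+2) (j+1)
    = (4*j+4)*Aa (e+1) j + (4*j+6)*Aa (e+1) (j+1) + e*Aa e (j+1) := by
  have cf1 := closedA (e+2) j
  have cf2 := CAu e j
  have cf3 := closedA (e+1) j
  have cf4 := closedA e j
  rw [show e+2+j+1 = e+j+3 from by ring, show e+2+j = e+j+2 from by ring] at cf1
  rw [show e+1+j+1 = e+j+2 from by ring, show e+1+j = e+j+1 from by ring] at cf3
  have hp1 := Nat.choose_succ_succ' (e+j) (2*j+1)
  have hp2 := Nat.choose_succ_succ' (e+j+1) (2*j+1)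
  have hp3 := Nat.choose_succ_succ' (e+j+2) (2*j+1)
  have hp4 := Nat.choose_succ_succ' (e+j) (2*j)
  have hp5 := Nat.choose_succ_succ' (e+j+1) (2*j)
  have h6 := Nat.add_one_mul_choose_eq (e+j) (2*j+1)
  have h7 := Nat.add_one_mul_choose_eq (e+j) (2*j)
  have h8 := Nat.add_one_mul_choose_eq (e+j+1) (2*j)
  simp only [Nat.succ_eq_add_one, show 2*j+1+1 = 2*j+2 from by ring,
    show e+j+1+1 = e+j+2 from by ring, show e+j+2+1 = e+j+3 from by ring]
    at hp1 hp2 hp3 hp4 hp5 h6 h7 h8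
  apply Nat.eq_of_mul_eq_mul_left (show 0 < 2 by norm_num)
  rw [Nat.mul_add, Nat.mul_add]
  zify at cf1 cf2 cf3 cf4 hp1 hp2 hp3 hp4 hp5 h6 h7 h8 ⊢
  linear_combination (↑e+2)*cf1 - (4*(j:ℤ)+4)*cf2 - (4*(j:ℤ)+6)*cf3 - (e:ℤ)*cf4
    + (4:ℤ)^(j+1) * ( (e:ℤ)*hp1 + (2*(e:ℤ)-4*j-2)*hp2 + ((e:ℤ)+2)*hp3
        + (3*(e:ℤ)+4*j+4)*hp4 + ((e:ℤ)+2*j+3)*hp5 + 4*h6 + 3*h7 + h8 )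

lemma inner (L j : ℕ) (hj : j ≤ L) :
    ∑ k ∈ range (L+1), (2*L).choose (2*k) * (L-k).choose (L-j) = Aa L j := by
  have hsub : range (j+1) ⊆ range (L+1) := by
    intro x hx; simp only [mem_range] at *; omega
  have hvan : ∀ x ∈ range (L+1), x ∉ range (j+1)
      → (2*L).choose (2*x) * (L-x).choose (L-j) = 0 := by
    intro x hx hnx
    simp only [mem_range] at hx hnx
    have hz : (L-x).choose (L-j) = 0 := Nat.choose_eq_zero_of_lt (by omega)
    simp [hz]
  rw [← Finset.sum_subset hsub hvan]
  refine sum_congr rfl fun k hk => ?_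
  simp only [mem_range] at hk
  rw [show L-j = (L-k)-(j-k) from by omega, Nat.choose_symm (by omega : j-k ≤ L-k)]

lemma expand (L m : ℕ) :
    ∑ k ∈ range (L+1), (2*L).choose (2*k) * (m+L-k).choose L
      = ∑ j ∈ range (L+1), Aa L j * m.choose j := by
  calc ∑ k ∈ range (L+1), (2*L).choose (2*k) * (m+L-k).choose L
      = ∑ k ∈ range (L+1), ∑ j ∈ range (L+1),
          (2*L).choose (2*k) * ((L-k).choose (L-j) * m.choose j) := by
        refine sum_congr rfl fun k hk => ?_
        simp only [mem_range] at hk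
        rw [← Finset.mul_sum]
        congr 1
        rw [show m+L-k = m+(L-k) from by omega, Nat.add_choose_eq,
          Finset.Nat.sum_antidiagonal_eq_sum_range_succ
            (fun a b => m.choose a * (L-k).choose b) L]
        exact sum_congr rfl fun j hj => by ring
    _ = ∑ j ∈ range (L+1), ∑ k ∈ range (L+1),
          (2*L).choose (2*k) * ((L-k).choose (L-j) * m.choose j) := Finset.sum_comm
    _ = ∑ j ∈ range (L+1), Aa L j * m.choose j := by
        refine sum_congr rfl fun j hj => ?_
        simp only [mem_range] at hj
        rw [← inner L j (by omega), Finset.sum_mul]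
        exact sum_congr rfl fun k hk => by ring

lemma absorb (m j : ℕ) :
    (4*m+2) * m.choose j = (4*j+4) * m.choose (j+1) + (4*j+2) * m.choose j := by
  rcases le_or_gt j m with h | h
  · have hh := Nat.choose_succ_right_eq m j
    zify [h] at hh ⊢
    linear_combination (-4:ℤ)*hh
  · rw [Nat.choose_eq_zero_of_lt h, Nat.choose_eq_zero_of_lt (show m < j+1 by omega)]
    simp

end typeC

theorem typeC_root_polytope_recurrence (d m : ℕ) (hd : 2 ≤ d) :
    d * (∑ k ∈ Finset.range (d + 1), (2 * d).choose (2 * k) * (m + d - k).choose d)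
      = 2 * (2 * m + 1)
          * (∑ k ∈ Finset.range d, (2 * (d - 1)).choose (2 * k) * (m + (d - 1) - k).choose (d - 1))
        + (d - 2)
          * (∑ k ∈ Finset.range (d - 1), (2 * (d - 2)).choose (2 * k) * (m + (d - 2) - k).choose (d - 2)) := by
  open typeC in
  obtain ⟨e, rfl⟩ : ∃ e, d = e + 2 := ⟨d - 2, by omega⟩
  simp only [show e+2-1 = e+1 from rfl, show e+2-2 = e from rfl]
  have h1 := typeC.expand (e+2) m
  have h2 := typeC.expand (e+1) m
  have h3 := typeC.expand e m
  rw [show e+1+1 = e+2 from rfl] at h2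
  rw [h1, h2, h3]
  -- extend the two right sums to range (e+2+1)
  have hsub2 : range (e+2) ⊆ range (e+2+1) := by intro x hx; simp only [mem_range] at *; omega
  have hsub3 : range (e+1) ⊆ range (e+2+1) := by intro x hx; simp only [mem_range] at *; omega
  have hmid : ∑ j ∈ range (e+2), typeC_Aa (e+1) j * m.choose j
      = ∑ j ∈ range (e+2+1), typeC_Aa (e+1) j * m.choose j := by
    refine Finset.sum_subset hsub2 fun x hx hnx => ?_
    simp only [mem_range] at hx hnx
    rw [typeC.azero (e+1) x (by omega), zero_mul]
  have hright : ∑ j ∈ range (e+1), typeC_Aa e j * m.choose j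
      = ∑ j ∈ range (e+2+1), typeC_Aa e j * m.choose j := by
    refine Finset.sum_subset hsub3 fun x hx hnx => ?_
    simp only [mem_range] at hx hnx
    rw [typeC.azero e x (by omega), zero_mul]
  rw [hmid, hright, show 2*(2*m+1) = 4*m+2 from by ring, Finset.mul_sum, Finset.mul_sum,
    Finset.mul_sum]
  -- split the middle sum with the absorption identity
  have hsplit : ∀ j ∈ range (e+2+1),
      (4*m+2)*(typeC_Aa (e+1) j * m.choose j)
        = (4*j+4)*(typeC_Aa (e+1) j * m.choose (j+1)) + (4*j+2)*(typeC_Aa (e+1) j * m.choose j) := by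
    intro j _
    rw [show (4*m+2)*(typeC_Aa (e+1) j * m.choose j) = typeC_Aa (e+1) j * ((4*m+2) * m.choose j) from by
      ring, typeC.absorb m j]
    ring
  rw [Finset.sum_congr rfl hsplit, Finset.sum_add_distrib]
  -- expand the left side with keyA
  have hL : ∑ j ∈ range (e+2+1), (e+2)*(typeC_Aa (e+2) j * m.choose j)
      = (∑ i ∈ range (e+2), (4*i+4)*(typeC_Aa (e+1) i * m.choose (i+1)))
        + (∑ i ∈ range (e+2), (4*i+6)*(typeC_Aa (e+1) (i+1) * m.choose (i+1)))
        + (∑ i ∈ range (e+2), e*(typeC_Aa e (i+1) * m.choose (i+1)))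
        + (e+2) := by
    rw [Finset.sum_range_succ']
    have hterm : ∀ i ∈ range (e+2),
        (e+2)*(typeC_Aa (e+2) (i+1) * m.choose (i+1))
          = (4*i+4)*(typeC_Aa (e+1) i * m.choose (i+1)) + (4*i+6)*(typeC_Aa (e+1) (i+1) * m.choose (i+1))
            + e*(typeC_Aa e (i+1) * m.choose (i+1)) := by
      intro i _
      rw [← mul_assoc, typeC.keyA e i]
      ring
    rw [Finset.sum_congr rfl hterm, Finset.sum_add_distrib, Finset.sum_add_distrib,
      typeC.Aa_zero, Nat.choose_zero_right]
    ring
  have hR1 : ∑ j ∈ range (e+2+1), (4*j+4)*(typeC_Aa (e+1) j * m.choose (j+1))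
      = ∑ i ∈ range (e+2), (4*i+4)*(typeC_Aa (e+1) i * m.choose (i+1)) := by
    rw [Finset.sum_range_succ, typeC.azero (e+1) (e+2) (by omega)]
    simp
  have hR2 : ∑ j ∈ range (e+2+1), (4*j+2)*(typeC_Aa (e+1) j * m.choose j)
      = (∑ i ∈ range (e+2), (4*i+6)*(typeC_Aa (e+1) (i+1) * m.choose (i+1))) + 2 := by
    rw [Finset.sum_range_succ']
    have hterm : ∀ i ∈ range (e+2),
        (4*(i+1)+2)*(typeC_Aa (e+1) (i+1) * m.choose (i+1))
          = (4*i+6)*(typeC_Aa (e+1) (i+1) * m.choose (i+1)) := by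
      intro i _; ring
    rw [Finset.sum_congr rfl hterm, typeC.Aa_zero, Nat.choose_zero_right]
  have hR3 : ∑ j ∈ range (e+2+1), e*(typeC_Aa e j * m.choose j)
      = (∑ i ∈ range (e+2), e*(typeC_Aa e (i+1) * m.choose (i+1))) + e := by
    rw [Finset.sum_range_succ', typeC.Aa_zero, Nat.choose_zero_right]
    ring
  rw [hL, hR1, hR2, hR3]
  ring
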